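/- Let G : [0,∞) → ℝ^{K×K} be a decay kernel that is nonincreasing (i.e., t ↦ x^⊤ G(t) x is nonincreasing for every x ∈ ℝ^K) and positive definite (i.e., the extension \tilde G with \tilde G(t) = G(t) for t > 0, \tilde G(0) = (G(0) + G(0)^⊤)/2, \tilde G(t) = G(−t)^⊤ for t < 0, is a positive definite matrix-valued function). Then G is nonnegative, i.e., x^⊤ G(t) x ≥ 0 for all x ∈ ℝ^K and t ≥ 0. -/

import Mathlib

open Matrix BigOperators
open scoped ComplexOrder

/-- `H : ℝ → ℂ^{K×K}` is a positive definite matrix-valued function. -/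
def IsPosDefMatrixFun {K : ℕ} (H : ℝ → Matrix (Fin K) (Fin K) ℂ) : Prop :=
  ∀ (N : ℕ) (t : Fin N → ℝ) (z : Fin N → (Fin K → ℂ)),
    0 ≤ ∑ i, ∑ j, star (z i) ⬝ᵥ (H (t i - t j)) *ᵥ (z j)
/-- The extension `\tilde G` of a decay kernel `G` to the whole real line. -/
noncomputable def tildeKernel {K : ℕ} (G : ℝ → Matrix (Fin K) (Fin K) ℝ) :
    ℝ → Matrix (Fin K) (Fin K) ℝ :=
  fun t => if 0 < t then G t else if t = 0 then (2 : ℝ)⁻¹ • ((G 0)ᵀ + G 0) else (G (-t))ᵀ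
lemma quad_map {K : ℕ} (M : Matrix (Fin K) (Fin K) ℝ) (x : Fin K → ℝ) :
    star (fun k => (x k : ℂ)) ⬝ᵥ (M.map Complex.ofReal) *ᵥ (fun k => (x k : ℂ))
      = ((x ⬝ᵥ M *ᵥ x : ℝ) : ℂ) := by
  simp only [dotProduct, mulVec, Matrix.map_apply, Pi.star_apply, Complex.star_def,
    Complex.conj_ofReal]
  push_cast
  ring_nf

lemma quad_transpose {K : ℕ} (M : Matrix (Fin K) (Fin K) ℝ) (x : Fin K → ℝ) :
    x ⬝ᵥ Mᵀ *ᵥ x = x ⬝ᵥ M *ᵥ x := by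
  rw [mulVec_transpose, dotProduct_comm, ← dotProduct_mulVec]

lemma quad_tilde {K : ℕ} (G : ℝ → Matrix (Fin K) (Fin K) ℝ) (x : Fin K → ℝ) (t : ℝ) :
    x ⬝ᵥ (tildeKernel G t) *ᵥ x = x ⬝ᵥ (G |t|) *ᵥ x := by
  unfold tildeKernel
  rcases lt_trichotomy t 0 with h | h | h
  · rw [if_neg (by linarith), if_neg (by linarith), abs_of_neg h, quad_transpose]
  · subst h
    rw [if_neg (lt_irrefl 0), if_pos rfl, abs_zero, smul_add, add_mulVec, dotProduct_add,
      smul_mulVec, smul_mulVec, dotProduct_smul, dotProduct_smul, quad_transpose,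
      smul_eq_mul]
    ring
  · rw [if_pos h, abs_of_pos h]

theorem nonincreasing_posDef_kernel_nonneg {K : ℕ}
    (G : ℝ → Matrix (Fin K) (Fin K) ℝ)
    (hmono : ∀ x : Fin K → ℝ, ∀ s t : ℝ, 0 ≤ s → s ≤ t →
      x ⬝ᵥ (G t) *ᵥ x ≤ x ⬝ᵥ (G s) *ᵥ x)
    (hpd : IsPosDefMatrixFun (fun t => (tildeKernel G t).map Complex.ofReal)) :
    ∀ t : ℝ, 0 ≤ t → ∀ x : Fin K → ℝ, 0 ≤ x ⬝ᵥ (G t) *ᵥ x := by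
  intro t₀ ht₀ x
  by_contra hneg
  push_neg at hneg
  set q : ℝ → ℝ := fun s => x ⬝ᵥ (G s) *ᵥ x with hq
  set T : ℝ := max t₀ 1 with hT
  have hT1 : (1:ℝ) ≤ T := le_max_right _ _
  have hT0 : (0:ℝ) ≤ T := by linarith
  have hqT : q T ≤ q t₀ := hmono x t₀ T ht₀ (le_max_left _ _)
  have hqTneg : q T < 0 := lt_of_le_of_lt hqT hneg
  obtain ⟨n, hn⟩ := exists_nat_gt (q 0 / (-(q T)))
  have hn' : q 0 < (n:ℝ) * (-(q T)) := by
    rw [div_lt_iff₀ (by linarith)] at hn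
    linarith
  have hpos := hpd (n+1) (fun i => (i : ℝ) * T) (fun _ => fun k => (x k : ℂ))
  have hsum : (∑ i : Fin (n+1), ∑ j : Fin (n+1),
      star (fun k => (x k : ℂ)) ⬝ᵥ ((tildeKernel G (((i:ℝ)*T) - ((j:ℝ)*T))).map Complex.ofReal)
        *ᵥ (fun k => (x k : ℂ)))
      = ((∑ i : Fin (n+1), ∑ j : Fin (n+1), q |((i:ℝ) - (j:ℝ))*T| : ℝ) : ℂ) := by
    push_cast
    refine Finset.sum_congr rfl fun i _ => Finset.sum_congr rfl fun j _ => ?_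
    rw [quad_map, quad_tilde]
    ring_nf
    rfl
  rw [hsum] at hpos
  have hposR : (0:ℝ) ≤ ∑ i : Fin (n+1), ∑ j : Fin (n+1), q |((i:ℝ) - (j:ℝ))*T| := by
    exact_mod_cast hpos
  have hterm : ∀ i j : Fin (n+1),
      q |((i:ℝ) - (j:ℝ))*T| ≤ if i = j then q 0 else q T := by
    intro i j
    by_cases h : i = j
    · subst h; simp
    · rw [if_neg h]
      have hvne : (i:ℕ) ≠ (j:ℕ) := fun hh => h (Fin.val_injective hh)
      have h1 : (1:ℤ) ≤ |(i:ℤ) - (j:ℤ)| :=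
        Int.one_le_abs (sub_ne_zero.2 (by exact_mod_cast hvne))
      have hij : (1:ℝ) ≤ |((i:ℝ) - (j:ℝ))| := by
        have h2 : ((1:ℤ):ℝ) ≤ ((|(i:ℤ) - (j:ℤ)|:ℤ):ℝ) := by exact_mod_cast h1
        push_cast at h2
        linarith
      have habs : T ≤ |((i:ℝ) - (j:ℝ))*T| := by
        rw [abs_mul, abs_of_nonneg hT0]
        nlinarith
      exact hmono x T _ hT0 habs
  have hbound : (∑ i : Fin (n+1), ∑ j : Fin (n+1), q |((i:ℝ) - (j:ℝ))*T|)
      ≤ ∑ i : Fin (n+1), ∑ j : Fin (n+1), if i = j then q 0 else q T :=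
    Finset.sum_le_sum fun i _ => Finset.sum_le_sum fun j _ => hterm i j
  have hval : (∑ i : Fin (n+1), ∑ j : Fin (n+1), (if i = j then q 0 else q T))
      = (n+1 : ℝ) * (q 0 + (n:ℝ) * q T) := by
    have hrow : ∀ i : Fin (n+1), (∑ j : Fin (n+1), (if i = j then q 0 else q T))
        = q 0 + (n:ℝ) * q T := by
      intro i
      have hsplit : ∀ j : Fin (n+1),
          (if i = j then q 0 else q T) = q T + (if i = j then q 0 - q T else 0) := by
        intro j; by_cases hh : i = j <;> simp [hh]
      rw [Finset.sum_congr rfl fun j _ => hsplit j, Finset.sum_add_distrib,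
        Finset.sum_ite_eq Finset.univ i (fun _ => q 0 - q T), Finset.sum_const]
      simp [Finset.card_univ]
      ring
    rw [Finset.sum_congr rfl fun i _ => hrow i, Finset.sum_const]
    simp [Finset.card_univ]
    ring
  rw [hval] at hbound
  nlinarith [hposR, hbound, hn']
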